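/- arXiv:1807.08181 — 4 statements merged into one kernel-verified Lean document; each statement's English description precedes it below -/
import Mathlib

section
/- For nonnegative integers n, k with k ≤ n and a positive integer t, the number of strictly increasing k-tuples (T_1,...,T_k) of integers from {1,...,n} such that T_{t-1+j} ≥ t-1+2j for every j with 1 ≤ j ≤ k-t+1 (a vacuous condition if k ≤ t-1) equals the number of NE-paths from (0,0) to (k, n-k) that never touch the line y = x - t. -/
namespace Stmt4Aux

/-! ### Counting function for tableaux -/

/-- number of entries of `T` that are `≤ i` -/
def eT {k : ℕ} (T : Fin k → ℕ) (i : ℕ) : ℕ :=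
  (Finset.univ.filter (fun j => T j ≤ i)).card

lemma card_val_lt {k : ℕ} (c : ℕ) (hc : c ≤ k) :
    (Finset.univ.filter (fun j : Fin k => j.val < c)).card = c := by
  classical
  rw [← Finset.card_range c]
  apply Finset.card_bij (fun j _ => j.val)
  · intro a ha; simp only [Finset.mem_filter, Finset.mem_univ, true_and] at ha
    simpa using ha
  · intro a _ b _ h; exact Fin.ext h
  · intro b hb
    simp only [Finset.mem_range] at hb
    exact ⟨⟨b, lt_of_lt_of_le hb hc⟩, by simp [hb], rfl⟩

lemma eT_zero {k : ℕ} (T : Fin k → ℕ) (hT : ∀ i, 1 ≤ T i) : eT T 0 = 0 := by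
  simp only [eT, Finset.card_eq_zero, Finset.filter_eq_empty_iff]
  intro j _; have := hT j; omega

lemma eT_top {n k : ℕ} (T : Fin k → ℕ) (hT : ∀ i, T i ≤ n) : eT T n = k := by
  rw [eT, Finset.filter_true_of_mem (fun j _ => hT j), Finset.card_univ, Fintype.card_fin]

lemma eT_le_k {k : ℕ} (T : Fin k → ℕ) (i : ℕ) : eT T i ≤ k := by
  simpa [eT] using Finset.card_filter_le Finset.univ (fun j => T j ≤ i)

lemma eT_mono {k : ℕ} (T : Fin k → ℕ) {i i' : ℕ} (h : i ≤ i') : eT T i ≤ eT T i' := by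
  apply Finset.card_le_card
  intro j hj
  simp only [Finset.mem_filter, Finset.mem_univ, true_and] at hj ⊢
  omega

lemma eT_le_self {k : ℕ} (T : Fin k → ℕ) (hmono : StrictMono T) (h1 : ∀ j, 1 ≤ T j)
    (i : ℕ) : eT T i ≤ i := by
  have := Finset.card_le_card_of_injOn T
    (s := Finset.univ.filter (fun j => T j ≤ i)) (t := Finset.Icc 1 i)
    (fun a ha => by
      simp only [Finset.mem_coe, Finset.mem_filter, Finset.mem_univ, true_and] at ha
      simp only [Finset.mem_coe, Finset.mem_Icc]; exact ⟨h1 a, ha⟩)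
    (fun a _ b _ h => hmono.injective h)
  simpa [Nat.card_Icc, eT] using this

lemma le_iff_lt_eT {k : ℕ} {T : Fin k → ℕ} (hmono : StrictMono T) (m : Fin k) (i : ℕ) :
    T m ≤ i ↔ m.val < eT T i := by
  constructor
  · intro h
    have hsub : Finset.univ.filter (fun j : Fin k => j.val < m.val + 1) ⊆
        Finset.univ.filter (fun j => T j ≤ i) := by
      intro j hj
      simp only [Finset.mem_filter, Finset.mem_univ, true_and] at hj ⊢
      exact le_trans (hmono.monotone (by exact Fin.le_def.mpr (by omega))) h
    have := Finset.card_le_card hsub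
    rwa [card_val_lt (m.val + 1) m.isLt] at this
  · intro h
    by_contra hc
    push_neg at hc
    have hsub : Finset.univ.filter (fun j : Fin k => T j ≤ i) ⊆
        Finset.univ.filter (fun j : Fin k => j.val < m.val) := by
      intro j hj
      simp only [Finset.mem_filter, Finset.mem_univ, true_and] at hj ⊢
      exact Fin.lt_def.mp (hmono.lt_iff_lt.mp (lt_of_le_of_lt hj hc))
    have := Finset.card_le_card hsub
    rw [card_val_lt m.val (le_of_lt m.isLt)] at this
    rw [eT] at h
    omega

lemma eT_succ_pos {k : ℕ} {T : Fin k → ℕ} (hinj : Function.Injective T) {i : ℕ}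
    (h : ∃ j, T j = i + 1) : eT T (i + 1) = eT T i + 1 := by
  classical
  obtain ⟨j0, hj0⟩ := h
  have hset : Finset.univ.filter (fun j => T j ≤ i + 1)
      = insert j0 (Finset.univ.filter (fun j => T j ≤ i)) := by
    ext j
    simp only [Finset.mem_filter, Finset.mem_univ, true_and, Finset.mem_insert]
    constructor
    · intro hj
      rcases eq_or_lt_of_le hj with h' | h'
      · exact Or.inl (hinj (h'.trans hj0.symm))
      · exact Or.inr (by omega)
    · rintro (rfl | hj) <;> omega
  rw [eT, hset, Finset.card_insert_of_notMem (by simp [hj0]), eT]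

lemma eT_succ_neg {k : ℕ} {T : Fin k → ℕ} {i : ℕ}
    (h : ¬ ∃ j, T j = i + 1) : eT T (i + 1) = eT T i := by
  push_neg at h
  unfold eT
  congr 1
  ext j
  simp only [Finset.mem_filter, Finset.mem_univ, true_and]
  have := h j
  omega

lemma eT_succ_le {k : ℕ} {T : Fin k → ℕ} (hinj : Function.Injective T) (i : ℕ) :
    eT T (i + 1) ≤ eT T i + 1 := by
  by_cases h : ∃ j, T j = i + 1
  · rw [eT_succ_pos hinj h]
  · rw [eT_succ_neg h]; omega

/-! ### Discrete intermediate value lemmas -/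

lemma nat_ivt (f : ℕ → ℕ) (hstep : ∀ i, f (i + 1) ≤ f i + 1) (b v : ℕ)
    (h1 : f 0 ≤ v) (h2 : v ≤ f b) : ∃ i, i ≤ b ∧ f i = v := by
  classical
  have hex : ∃ i, v ≤ f i := ⟨b, h2⟩
  refine ⟨Nat.find hex, Nat.find_min' hex h2, ?_⟩
  have hm : v ≤ f (Nat.find hex) := Nat.find_spec hex
  rcases Nat.eq_zero_or_pos (Nat.find hex) with h | h
  · rw [h]; rw [h] at hm; omega
  · have hprev : ¬ v ≤ f (Nat.find hex - 1) := Nat.find_min hex (by omega)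
    have h3 := hstep (Nat.find hex - 1)
    rw [Nat.sub_add_cancel h] at h3
    omega

lemma int_cross (g : ℕ → ℤ) (hstep : ∀ i, g (i + 1) ≤ g i + 1) (N : ℕ)
    (h0 : g 0 < 0) (hN : 0 ≤ g N) : ∃ i, i ≤ N ∧ g i = 0 := by
  classical
  have hex : ∃ i, 0 ≤ g i := ⟨N, hN⟩
  refine ⟨Nat.find hex, Nat.find_min' hex hN, ?_⟩
  have hm : 0 ≤ g (Nat.find hex) := Nat.find_spec hex
  have h : 0 < Nat.find hex := by
    rcases Nat.eq_zero_or_pos (Nat.find hex) with h | h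
    · rw [h] at hm; omega
    · exact h
  have hprev : ¬ 0 ≤ g (Nat.find hex - 1) := Nat.find_min hex (by omega)
  have h3 := hstep (Nat.find hex - 1)
  rw [Nat.sub_add_cancel h] at h3
  omega

lemma T_index_eq {k : ℕ} (T : Fin k → ℕ) {a b : ℕ} {ha : a < k} {hb : b < k}
    (h : a = b) : T ⟨a, ha⟩ = T ⟨b, hb⟩ := by subst h; rfl

/-! ### Key equivalence: admissibility ↔ path never touches the line -/

lemma adm_iff {t n k : ℕ} (ht : 0 < t) (hk : k ≤ n) (T : Fin k → ℕ)
    (hmono : StrictMono T) (hb : ∀ i, 1 ≤ T i ∧ T i ≤ n) :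
    (∀ j : ℕ, ∀ _ : 1 ≤ j, ∀ _ : j + t ≤ k + 1,
        t - 1 + 2 * j ≤ T ⟨t + j - 2, (by omega : t + j - 2 < k + 0)⟩) ↔
    (∀ i, i ≤ n → 2 * eT T i ≠ i + t) := by
  constructor
  · intro hadm i hi heq
    set m := eT T i with hm
    have hmi : m ≤ i := eT_le_self T hmono (fun j => (hb j).1) i
    have hmk : m ≤ k := eT_le_k T i
    have hm1 : 1 ≤ m := by omega
    have key : ∀ hh : t + (m - t + 1) - 2 < k,
        t - 1 + 2 * (m - t + 1) ≤ T ⟨t + (m - t + 1) - 2, hh⟩ → False := by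
      intro hh h6
      have h5 : T ⟨t + (m - t + 1) - 2, hh⟩ ≤ i := by
        apply (le_iff_lt_eT hmono _ i).mpr
        show t + (m - t + 1) - 2 < eT T i
        omega
      omega
    exact key _ (hadm (m - t + 1) (by omega) (by omega))
  · intro hnt j hj1 hj2
    suffices key : ∀ hh : t + j - 2 < k, t - 1 + 2 * j ≤ T ⟨t + j - 2, hh⟩ from key _
    intro hh
    by_contra hc
    push_neg at hc
    have hTle : T ⟨t + j - 2, hh⟩ ≤ t + 2 * j - 2 := by omega
    have hmlt : t + j - 2 < eT T (t + 2 * j - 2) :=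
      (le_iff_lt_eT hmono ⟨t + j - 2, hh⟩ _).mp hTle
    set g : ℕ → ℤ := fun i => 2 * (eT T i : ℤ) - i - t with hg
    have hstep : ∀ i, g (i + 1) ≤ g i + 1 := by
      intro i
      have := eT_succ_le hmono.injective (T := T) i
      simp only [hg]
      push_cast
      omega
    have h0 : g 0 < 0 := by
      simp only [hg, eT_zero T (fun j => (hb j).1)]
      push_cast
      omega
    have hN : ∃ N, N ≤ n ∧ 0 ≤ g N := by
      by_cases hcase : t + 2 * j - 2 ≤ n
      · refine ⟨t + 2 * j - 2, hcase, ?_⟩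
        simp only [hg]
        push_cast
        omega
      · refine ⟨n, le_rfl, ?_⟩
        have hk' : eT T n = k := eT_top T (fun j => (hb j).2)
        simp only [hg, hk']
        push_cast
        omega
    obtain ⟨N, hNn, hgN⟩ := hN
    obtain ⟨i, hiN, hi0⟩ := int_cross g hstep N h0 hgN
    have : 2 * (eT T i : ℤ) - i - t = 0 := hi0
    exact hnt i (le_trans hiN hNn) (by omega)

/-! ### Path-side counting function -/

def pc {n : ℕ} (P : Fin (n + 1) → ℤ × ℤ) (i : ℕ) : ℕ :=
  (P ⟨min i n, by omega⟩).1.toNat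

variable {n k : ℕ} {P : Fin (n + 1) → ℤ × ℤ}

lemma pc_spec (h0 : P 0 = (0, 0))
    (hstep : ∀ i : Fin n, P i.succ = P i.castSucc + (1, 0) ∨ P i.succ = P i.castSucc + (0, 1)) :
    ∀ i, (hi : i ≤ n) → P ⟨i, by omega⟩ = ((pc P i : ℤ), (i : ℤ) - pc P i) := by
  intro i
  induction i with
  | zero =>
    intro _
    have hpc : pc P 0 = 0 := by
      simp only [pc, Nat.zero_min, Fin.mk_zero, h0]
      rfl
    rw [Fin.mk_zero, h0, hpc]
    norm_num
  | succ i IH =>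
    intro hi
    have hi' : i < n := hi
    have IH' := IH (le_of_lt hi')
    have h := hstep ⟨i, hi'⟩
    rw [Fin.succ_mk, Fin.castSucc_mk, IH'] at h
    have hpc1 : pc P (i + 1) = (P ⟨i + 1, by omega⟩).1.toNat := by
      simp only [pc, Nat.min_eq_left hi]
    rcases h with h | h
    · have hfst : pc P (i + 1) = pc P i + 1 := by
        rw [hpc1, h]
        simp only [Prod.mk_add_mk, Prod.fst]
        omega
      rw [h, hfst]
      simp only [Prod.mk_add_mk, Prod.mk.injEq]
      push_cast
      constructor <;> ring
    · have hfst : pc P (i + 1) = pc P i := by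
        rw [hpc1, h]
        simp only [Prod.mk_add_mk, Prod.fst]
        omega
      rw [h, hfst]
      simp only [Prod.mk_add_mk, Prod.mk.injEq]
      push_cast
      constructor <;> ring

lemma pc_zero (h0 : P 0 = (0, 0)) : pc P 0 = 0 := by
  simp only [pc, Nat.zero_min, Fin.mk_zero, h0]
  rfl

lemma pc_n (hlast : P (Fin.last n) = ((k : ℤ), (n : ℤ) - k)) : pc P n = k := by
  have : Fin.last n = ⟨min n n, by omega⟩ := by
    simp [Fin.last, Nat.min_self]
  simp only [pc, ← this, hlast]
  exact Int.toNat_natCast k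

lemma pc_step (h0 : P 0 = (0, 0))
    (hstep : ∀ i : Fin n, P i.succ = P i.castSucc + (1, 0) ∨ P i.succ = P i.castSucc + (0, 1))
    {i : ℕ} (hi : i < n) :
    pc P (i + 1) = pc P i + 1 ∨ pc P (i + 1) = pc P i := by
  have h := hstep ⟨i, hi⟩
  rw [Fin.succ_mk, Fin.castSucc_mk, pc_spec h0 hstep i (le_of_lt hi),
    pc_spec h0 hstep (i + 1) hi] at h
  rcases h with h | h
  · left
    have := congrArg Prod.fst h
    simp at this
    omega
  · right
    have := congrArg Prod.fst h
    simp at this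
    omega

lemma pc_succ_bounds (h0 : P 0 = (0, 0))
    (hstep : ∀ i : Fin n, P i.succ = P i.castSucc + (1, 0) ∨ P i.succ = P i.castSucc + (0, 1))
    (i : ℕ) : pc P i ≤ pc P (i + 1) ∧ pc P (i + 1) ≤ pc P i + 1 := by
  by_cases hi : i < n
  · rcases pc_step h0 hstep hi with h | h <;> omega
  · have : min (i + 1) n = min i n := by omega
    have heq : pc P (i + 1) = pc P i := by simp only [pc, this]
    omega

lemma pc_mono (h0 : P 0 = (0, 0))
    (hstep : ∀ i : Fin n, P i.succ = P i.castSucc + (1, 0) ∨ P i.succ = P i.castSucc + (0, 1)) :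
    Monotone (pc P) :=
  monotone_nat_of_le_succ (fun i => (pc_succ_bounds h0 hstep i).1)

lemma pc_le_k (h0 : P 0 = (0, 0)) (hlast : P (Fin.last n) = ((k : ℤ), (n : ℤ) - k))
    (hstep : ∀ i : Fin n, P i.succ = P i.castSucc + (1, 0) ∨ P i.succ = P i.castSucc + (0, 1))
    (i : ℕ) : pc P i ≤ k := by
  by_cases hi : i ≤ n
  · rw [← pc_n hlast]
    exact pc_mono h0 hstep hi
  · have : pc P i = pc P n := by
      simp only [pc, Nat.min_eq_right (by omega : n ≤ i), Nat.min_self]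
    rw [this, pc_n hlast]



/-! ### Forward map -/

lemma forward_mem {t n k : ℕ} (ht : 0 < t) (hk : k ≤ n) (T : Fin k → ℕ)
    (hmono : StrictMono T) (hb : ∀ i, 1 ≤ T i ∧ T i ≤ n)
    (hadm : ∀ j : ℕ, ∀ _ : 1 ≤ j, ∀ _ : j + t ≤ k + 1,
      t - 1 + 2 * j ≤ T ⟨t + j - 2, (by omega : t + j - 2 < k + 0)⟩) :
    (fun i : Fin (n + 1) => ((eT T i.val : ℤ), (i.val : ℤ) - eT T i.val)) 0 = (0, 0) ∧
    (fun i : Fin (n + 1) => ((eT T i.val : ℤ), (i.val : ℤ) - eT T i.val)) (Fin.last n)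
        = ((k : ℤ), (n : ℤ) - k) ∧
    (∀ i : Fin n,
      (fun i : Fin (n + 1) => ((eT T i.val : ℤ), (i.val : ℤ) - eT T i.val)) i.succ
        = (fun i : Fin (n + 1) => ((eT T i.val : ℤ), (i.val : ℤ) - eT T i.val)) i.castSucc
            + (1, 0) ∨
      (fun i : Fin (n + 1) => ((eT T i.val : ℤ), (i.val : ℤ) - eT T i.val)) i.succ
        = (fun i : Fin (n + 1) => ((eT T i.val : ℤ), (i.val : ℤ) - eT T i.val)) i.castSucc
            + (0, 1)) ∧
    (∀ i : Fin (n + 1),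
      ((fun i : Fin (n + 1) => ((eT T i.val : ℤ), (i.val : ℤ) - eT T i.val)) i).2
        ≠ ((fun i : Fin (n + 1) => ((eT T i.val : ℤ), (i.val : ℤ) - eT T i.val)) i).1 - t) := by
  classical
  have h1 : ∀ j, 1 ≤ T j := fun j => (hb j).1
  have h2 : ∀ j, T j ≤ n := fun j => (hb j).2
  refine ⟨?_, ?_, ?_, ?_⟩
  · simp [eT_zero T h1]
  · simp [eT_top T h2]
  · intro i
    by_cases h : ∃ j, T j = i.val + 1
    · left
      simp only [Fin.val_succ, Fin.coe_castSucc, eT_succ_pos hmono.injective h,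
        Prod.mk_add_mk, Prod.mk.injEq]
      push_cast
      constructor <;> ring
    · right
      simp only [Fin.val_succ, Fin.coe_castSucc, eT_succ_neg h,
        Prod.mk_add_mk, Prod.mk.injEq]
      push_cast
      constructor <;> ring
  · intro i hEq
    simp only at hEq
    have hne := (adm_iff ht hk T hmono hb).mp hadm i.val (by omega)
    omega

end Stmt4Aux

open Stmt4Aux in
/-- The number of t-admissible (n,k)-columnar tableaux (strictly increasing k-tuples
from {1,…,n} with `T_{t-1+j} ≥ t-1+2j` for `1 ≤ j ≤ k-t+1`, entries indexed 1-based,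
so entry `T_{t-1+j}` is `T ⟨t+j-2, _⟩` with 0-based `Fin` indexing) equals the number of
t-admissible NE-paths from (0,0) to (k, n-k) (paths never touching `y = x - t`). -/
theorem stmt4 (t n k : ℕ) (ht : 0 < t) (hk : k ≤ n) :
    Nat.card {T : Fin k → ℕ //
        StrictMono T ∧ (∀ i, 1 ≤ T i ∧ T i ≤ n) ∧
        (∀ j : ℕ, ∀ _ : 1 ≤ j, ∀ _ : j + t ≤ k + 1,
          t - 1 + 2 * j ≤ T ⟨t + j - 2, by omega⟩)}
      = Nat.card {P : Fin (n + 1) → ℤ × ℤ //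
        P 0 = (0, 0) ∧ P (Fin.last n) = ((k : ℤ), (n : ℤ) - k) ∧
        (∀ i : Fin n, P i.succ = P i.castSucc + (1, 0) ∨ P i.succ = P i.castSucc + (0, 1)) ∧
        (∀ i : Fin (n + 1), (P i).2 ≠ (P i).1 - t)} := by
  classical
  set F : {T : Fin k → ℕ //
      StrictMono T ∧ (∀ i, 1 ≤ T i ∧ T i ≤ n) ∧
      (∀ j : ℕ, ∀ _ : 1 ≤ j, ∀ _ : j + t ≤ k + 1,
        t - 1 + 2 * j ≤ T ⟨t + j - 2, by omega⟩)} →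
      {P : Fin (n + 1) → ℤ × ℤ //
      P 0 = (0, 0) ∧ P (Fin.last n) = ((k : ℤ), (n : ℤ) - k) ∧
      (∀ i : Fin n, P i.succ = P i.castSucc + (1, 0) ∨ P i.succ = P i.castSucc + (0, 1)) ∧
      (∀ i : Fin (n + 1), (P i).2 ≠ (P i).1 - t)} :=
    fun a => ⟨fun i : Fin (n + 1) => ((eT a.1 i.val : ℤ), (i.val : ℤ) - eT a.1 i.val),
      forward_mem ht hk a.1 a.2.1 a.2.2.1 a.2.2.2⟩ with hF
  apply Nat.card_eq_of_bijective F
  constructor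
  · -- injectivity
    rintro ⟨T1, hm1, hb1, ha1⟩ ⟨T2, hm2, hb2, ha2⟩ hab
    have he : ∀ i : ℕ, i ≤ n → eT T1 i = eT T2 i := by
      intro i hi
      have h := congrFun (congrArg Subtype.val hab) ⟨i, by omega⟩
      simp only [hF] at h
      have := congrArg Prod.fst h
      simp only at this
      exact_mod_cast this
    apply Subtype.ext
    funext m
    simp only
    apply le_antisymm
    · apply (le_iff_lt_eT hm1 m (T2 m)).mpr
      rw [he (T2 m) (hb2 m).2]
      exact (le_iff_lt_eT hm2 m (T2 m)).mp le_rfl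
    · apply (le_iff_lt_eT hm2 m (T1 m)).mpr
      rw [← he (T1 m) (hb1 m).2]
      exact (le_iff_lt_eT hm1 m (T1 m)).mp le_rfl
  · -- surjectivity
    rintro ⟨P, h0, hlast, hstep, htouch⟩
    have hpc0 : pc P 0 = 0 := pc_zero h0
    have hpcn : pc P n = k := pc_n hlast
    have hmonoc : Monotone (pc P) := pc_mono h0 hstep
    have hstep1 : ∀ i, pc P (i + 1) ≤ pc P i + 1 := fun i => (pc_succ_bounds h0 hstep i).2
    have ex : ∀ m : Fin k, ∃ i, pc P i = m.val + 1 := by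
      intro m
      obtain ⟨i, _, hi⟩ := nat_ivt (pc P) hstep1 n (m.val + 1) (by omega)
        (by rw [hpcn]; omega)
      exact ⟨i, hi⟩
    set T : Fin k → ℕ := fun m => Nat.find (ex m) with hT
    have hfind : ∀ m, pc P (T m) = m.val + 1 := fun m => Nat.find_spec (ex m)
    have hle_iff : ∀ (m : Fin k) (i : ℕ), T m ≤ i ↔ m.val + 1 ≤ pc P i := by
      intro m i
      constructor
      · intro h
        rw [← hfind m]
        exact hmonoc h
      · intro h
        obtain ⟨i', hi'le, hi'⟩ := nat_ivt (pc P) hstep1 i (m.val + 1) (by omega) h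
        exact le_trans (Nat.find_min' (ex m) hi') hi'le
    have hTmono : StrictMono T := by
      intro m1 m2 h12
      rcases Nat.lt_or_ge (T m1) (T m2) with h | h
      · exact h
      · exfalso
        have h2 := (hle_iff m2 (T m1)).mp h
        rw [hfind m1] at h2
        have := Fin.lt_def.mp h12
        omega
    have hTb : ∀ m, 1 ≤ T m ∧ T m ≤ n := by
      intro m
      constructor
      · rcases Nat.eq_zero_or_pos (T m) with h | h
        · have := hfind m
          rw [h, hpc0] at this
          omega
        · omega
      · exact (hle_iff m n).mpr (by rw [hpcn]; omega)
    have heTpc : ∀ i, eT T i = pc P i := by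
      intro i
      have hci : pc P i ≤ k := pc_le_k h0 hlast hstep i
      have hfe : Finset.univ.filter (fun m : Fin k => T m ≤ i)
          = Finset.univ.filter (fun m : Fin k => m.val < pc P i) := by
        ext m
        simp only [Finset.mem_filter, Finset.mem_univ, true_and, hle_iff m i]
        omega
      rw [eT, hfe, card_val_lt _ hci]
    have hadmT : ∀ j : ℕ, ∀ _ : 1 ≤ j, ∀ _ : j + t ≤ k + 1,
        t - 1 + 2 * j ≤ T ⟨t + j - 2, by omega⟩ := by
      apply (adm_iff ht hk T hTmono hTb).mpr
      intro i hi h2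
      have hP := pc_spec h0 hstep i hi
      have hne := htouch ⟨i, by omega⟩
      rw [hP] at hne
      simp only at hne
      rw [heTpc] at h2
      omega
    refine ⟨⟨T, hTmono, hTb, hadmT⟩, ?_⟩
    apply Subtype.ext
    simp only [hF]
    funext i
    have hiv : i.val ≤ n := by omega
    rw [heTpc, ← pc_spec h0 hstep i.val hiv]
end

section
/- For a nonnegative integer n, the number of integers k with 0 ≤ k ≤ n such that the binomial coefficient C(n,k) is odd equals 2^{d(n)}, where d(n) is the number of ones in the binary representation of n. -/
/-- `d n` is the number of ones in the binary representation of `n`. -/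
def dbin (n : ℕ) : ℕ := (Nat.digits 2 n).count 1

lemma odd_choose_key (n k : ℕ) :
    Odd (n.choose k) ↔ k % 2 ≤ n % 2 ∧ Odd ((n / 2).choose (k / 2)) := by
  haveI : Fact (Nat.Prime 2) := ⟨Nat.prime_two⟩
  have h := @Choose.choose_modEq_choose_mod_mul_choose_div_nat n k 2 _
  have h2 : n.choose k % 2 = ((n % 2).choose (k % 2) * (n / 2).choose (k / 2)) % 2 := h
  rw [Nat.odd_iff, h2, ← Nat.odd_iff, Nat.odd_mul]
  have hn : n % 2 < 2 := Nat.mod_lt _ (by norm_num)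
  have hk : k % 2 < 2 := Nat.mod_lt _ (by norm_num)
  constructor
  · rintro ⟨h1, h3⟩
    refine ⟨?_, h3⟩
    by_contra hle
    have : n % 2 = 0 ∧ k % 2 = 1 := by omega
    rw [this.1, this.2] at h1
    simp [Nat.odd_iff] at h1
  · rintro ⟨h1, h3⟩
    refine ⟨?_, h3⟩
    interval_cases hnn : n % 2 <;> interval_cases hkk : k % 2 <;>
      simp_all [Nat.odd_iff] <;> omega

lemma S_even (m : ℕ) :
    (Finset.range (2 * m + 1)).filter (fun k => Odd ((2 * m).choose k)) =
      ((Finset.range (m + 1)).filter (fun k => Odd (m.choose k))).image (fun j => 2 * j) := by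
  ext k
  simp only [Finset.mem_filter, Finset.mem_range, Finset.mem_image]
  constructor
  · rintro ⟨hk, hodd⟩
    rw [odd_choose_key] at hodd
    have hm2 : (2 * m) % 2 = 0 := by omega
    have hk2 : k % 2 = 0 := by omega
    have hd : (2 * m) / 2 = m := by omega
    refine ⟨k / 2, ⟨by omega, by rw [← hd]; exact hodd.2⟩, by omega⟩
  · rintro ⟨j, ⟨hj, hodd⟩, rfl⟩
    refine ⟨by omega, ?_⟩
    rw [odd_choose_key]
    constructor
    · omega
    · have : (2 * m) / 2 = m := by omega
      have h2 : (2 * j) / 2 = j := by omega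
      rw [this, h2]; exact hodd

lemma S_odd (m : ℕ) :
    (Finset.range (2 * m + 2)).filter (fun k => Odd ((2 * m + 1).choose k)) =
      ((Finset.range (m + 1)).filter (fun k => Odd (m.choose k))).image (fun j => 2 * j) ∪
      ((Finset.range (m + 1)).filter (fun k => Odd (m.choose k))).image (fun j => 2 * j + 1) := by
  ext k
  simp only [Finset.mem_filter, Finset.mem_range, Finset.mem_union, Finset.mem_image]
  have hd : (2 * m + 1) / 2 = m := by omega
  constructor
  · rintro ⟨hk, hodd⟩
    rw [odd_choose_key, hd] at hodd
    rcases Nat.even_or_odd k with he | ho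
    · left
      refine ⟨k / 2, ⟨by omega, ?_⟩, by rw [Nat.even_iff] at he; omega⟩
      have : k / 2 ≤ m := by omega
      convert hodd.2
    · right
      rw [Nat.odd_iff] at ho
      refine ⟨k / 2, ⟨by omega, hodd.2⟩, by omega⟩
  · rintro (⟨j, ⟨hj, hodd⟩, rfl⟩ | ⟨j, ⟨hj, hodd⟩, rfl⟩) <;>
      refine ⟨by omega, ?_⟩ <;> rw [odd_choose_key, hd] <;>
      constructor <;> first
        | omega
        | (convert hodd using 2; omega)

theorem stmt8 (n : ℕ) :
    ((Finset.range (n + 1)).filter fun k => Odd (n.choose k)).card = 2 ^ dbin n := by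
  induction n using Nat.strong_induction_on with
  | _ n ih =>
    rcases Nat.eq_zero_or_pos n with rfl | hpos
    · norm_num [dbin, Finset.filter_singleton]
    have inj1 : Function.Injective (fun j : ℕ => 2 * j) := fun a b h => by
      simp only at h; omega
    have inj2 : Function.Injective (fun j : ℕ => 2 * j + 1) := fun a b h => by
      simp only at h; omega
    rcases Nat.even_or_odd n with he | ho
    · obtain ⟨m, rfl⟩ := he
      have hm : 2 * m = m + m := by ring
      have hmpos : 0 < m := by omega
      have hrec := ih m (by omega)
      have hdb : dbin (m + m) = dbin m := by
        unfold dbin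
        rw [Nat.digits_def' (by norm_num : 1 < 2) (by omega)]
        have h1 : (m + m) % 2 = 0 := by omega
        have h2 : (m + m) / 2 = m := by omega
        rw [h1, h2, List.count_cons]
        simp
      rw [hdb, ← hrec, show m + m = 2 * m from by ring, S_even m,
        Finset.card_image_of_injective _ inj1]
    · obtain ⟨m, rfl⟩ := ho
      have hrec := ih m (by omega)
      have hdb : dbin (2 * m + 1) = dbin m + 1 := by
        unfold dbin
        rw [Nat.digits_def' (by norm_num : 1 < 2) (by omega)]
        have h1 : (2 * m + 1) % 2 = 1 := by omega
        have h2 : (2 * m + 1) / 2 = m := by omega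
        rw [h1, h2, List.count_cons]
        simp
      rw [hdb, show 2 * m + 1 + 1 = 2 * m + 2 by ring, S_odd m]
      rw [Finset.card_union_of_disjoint, Finset.card_image_of_injective _ inj1,
        Finset.card_image_of_injective _ inj2, hrec, pow_succ]
      · ring
      · rw [Finset.disjoint_left]
        rintro x hx hy
        simp only [Finset.mem_image] at hx hy
        obtain ⟨a, _, ha⟩ := hx
        obtain ⟨b, _, hb⟩ := hy
        omega
end

section
/- For a nonnegative integer m, the binomial coefficient C(2m+1, m) is odd if and only if 2m+1 = 2^q - 1 for some positive integer q. -/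
private lemma lucas_step (m : ℕ) :
    (2 * m + 1).choose m % 2 = m.choose (m / 2) % 2 := by
  have h := @Choose.choose_modEq_choose_mod_mul_choose_div_nat (2 * m + 1) m 2 ⟨Nat.prime_two⟩
  have h1 : (2 * m + 1) % 2 = 1 := by omega
  have h2 : (2 * m + 1) / 2 = m := by omega
  have h3 : Nat.choose 1 (m % 2) = 1 := by
    rcases Nat.mod_two_eq_zero_or_one m with h | h <;> rw [h] <;> simp
  rw [h1, h2, h3, one_mul] at h
  exact h

private lemma key (m : ℕ) :
    Odd ((2 * m + 1).choose m) ↔ ∃ k : ℕ, m + 1 = 2 ^ k := by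
  induction m using Nat.strong_induction_on with
  | _ m ih =>
    have hodd : Odd ((2 * m + 1).choose m) ↔ m.choose (m / 2) % 2 = 1 := by
      rw [Nat.odd_iff, lucas_step m]
    rcases Nat.even_or_odd m with he | ho
    · obtain ⟨a, rfl⟩ := he
      rcases Nat.eq_zero_or_pos a with rfl | ha
      · simp only [Nat.mul_zero, Nat.zero_add]
        constructor
        · intro _; exact ⟨0, rfl⟩
        · intro _; simp [Nat.choose]
      · obtain ⟨b, rfl⟩ : ∃ b, a = b + 1 := ⟨a - 1, by omega⟩
        have hdiv : (b + 1 + (b + 1)) / 2 = b + 1 := by omega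
        have heven : 2 ∣ (b + 1 + (b + 1)).choose (b + 1) := by
          have := Nat.two_dvd_centralBinom_succ b
          rwa [Nat.centralBinom_eq_two_mul_choose,
            show 2 * (b + 1) = b + 1 + (b + 1) by ring] at this
        rw [hodd, hdiv]
        constructor
        · intro h; exfalso; omega
        · rintro ⟨k, hk⟩
          exfalso
          rcases k with _ | k
          · omega
          · have : 2 ∣ 2 ^ (k + 1) := dvd_pow_self 2 (Nat.succ_ne_zero k)
            omega
    · obtain ⟨a, rfl⟩ := ho
      have hdiv : (2 * a + 1) / 2 = a := by omega
      rw [hodd, hdiv, ← Nat.odd_iff, ih a (by omega)]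
      constructor
      · rintro ⟨k, hk⟩
        exact ⟨k + 1, by rw [pow_succ]; omega⟩
      · rintro ⟨k, hk⟩
        rcases k with _ | k
        · omega
        · exact ⟨k, by rw [pow_succ] at hk; omega⟩

theorem stmt11 (m : ℕ) :
    Odd ((2 * m + 1).choose m) ↔ ∃ q : ℕ, 0 < q ∧ 2 * m + 1 = 2 ^ q - 1 := by
  rw [key]
  constructor
  · rintro ⟨k, hk⟩
    exact ⟨k + 1, Nat.succ_pos k, by rw [pow_succ]; omega⟩
  · rintro ⟨q, hq, hq2⟩
    obtain ⟨r, rfl⟩ := Nat.exists_eq_add_of_le hq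
    refine ⟨r, ?_⟩
    rw [pow_add, pow_one] at hq2
    have : 0 < 2 ^ r := Nat.pow_pos (by norm_num)
    omega
end

section
/- Suppose the positive integer t is not a power of two. Then the number of odd entries among a_t(t, 0), a_t(t, 1), ..., a_t(t, t), where a_t(t,k) = C(t,k) - C(t,k-t), equals 2^{d(t)} - 1, which is an odd number greater than one and hence not a power of two. -/
/-- Binomial coefficient on integers, zero unless `0 ≤ q ≤ p`. -/
def Cz (p q : ℤ) : ℤ := if 0 ≤ q ∧ q ≤ p then ((p.toNat).choose q.toNat : ℤ) else 0

lemma mem_bitIndices_iff {n i : ℕ} : i ∈ n.bitIndices ↔ n.testBit i = true := by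
  induction n using Nat.binaryRec generalizing i with
  | zero => simp
  | bit b n ih =>
    cases b
    · rw [Nat.bitIndices_bit_false]
      cases i with
      | zero => rw [Nat.testBit_bit_zero]; simp
      | succ i => rw [Nat.testBit_bit_succ, ← ih]; simp
    · rw [Nat.bitIndices_bit_true]
      cases i with
      | zero => rw [Nat.testBit_bit_zero]; simp
      | succ i => rw [Nat.testBit_bit_succ, ← ih]; simp

lemma dbin_eq_length (n : ℕ) : dbin n = n.bitIndices.length := by
  induction n using Nat.binaryRec with
  | zero => simp [dbin]
  | bit b n ih =>
    have ihl : (Nat.digits 2 n).count 1 = n.bitIndices.length := ih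
    cases b
    · have hb : Nat.bit false n = 2 * n := by simp [Nat.bit]
      rcases Nat.eq_zero_or_pos n with rfl | hn
      · simp [dbin, hb]
      · rw [Nat.bitIndices_bit_false]
        rw [dbin, hb, Nat.digits_def' (by norm_num : (1:ℕ) < 2) (by omega)]
        have h1 : 2 * n % 2 = 0 := by omega
        have h2 : 2 * n / 2 = n := by omega
        rw [h1, h2, List.count_cons]
        simp [ihl]
    · have hb : Nat.bit true n = 2 * n + 1 := by simp [Nat.bit]
      rw [Nat.bitIndices_bit_true]
      rw [dbin, hb, Nat.digits_def' (by norm_num : (1:ℕ) < 2) (by omega)]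
      have h1 : (2 * n + 1) % 2 = 1 := by omega
      have h2 : (2 * n + 1) / 2 = n := by omega
      rw [h1, h2, List.count_cons]
      simp [ihl]

lemma div_pow_mod_two (x i : ℕ) : x / 2 ^ i % 2 = (x.testBit i).toNat := by
  rw [Nat.testBit_eq_decide_div_mod_eq]
  rcases Nat.mod_two_eq_zero_or_one (x / 2 ^ i) with h | h <;> simp [h]

instance : Fact (Nat.Prime 2) := ⟨Nat.prime_two⟩

lemma odd_choose_iff {t k : ℕ} (hk : k ≤ t) :
    Odd (t.choose k) ↔ ∀ i, k.testBit i = true → t.testBit i = true := by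
  set a := t + 1 with ha
  have hta : t < 2 ^ a := lt_of_lt_of_le (Nat.lt_two_pow_self (n := t))
    (Nat.pow_le_pow_right (by norm_num) (by omega))
  have hka : k < 2 ^ a := lt_of_le_of_lt hk hta
  have hmod := Choose.lucas_theorem_nat (p := 2) hta hka
  have hodd : Odd (t.choose k) ↔
      ∀ i ∈ Finset.range a, Odd ((t / 2 ^ i % 2).choose (k / 2 ^ i % 2)) := by
    have h1 : Odd (t.choose k) ↔
        Odd (∏ i ∈ Finset.range a, (t / 2 ^ i % 2).choose (k / 2 ^ i % 2)) := by
      rw [Nat.odd_iff, Nat.odd_iff, hmod]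
    rw [h1, ← Nat.not_even_iff_odd, even_iff_two_dvd,
      Nat.prime_two.prime.dvd_finset_prod_iff]
    push_neg
    simp [← Nat.not_even_iff_odd, even_iff_two_dvd]
  rw [hodd]
  constructor
  · intro h i hki
    have hia : i < a := by
      by_contra hia
      have : k.testBit i = false :=
        Nat.testBit_lt_two_pow (lt_of_lt_of_le hka (Nat.pow_le_pow_right (by norm_num) (by omega)))
      rw [this] at hki; exact absurd hki (by simp)
    have := h i (Finset.mem_range.mpr hia)
    rw [div_pow_mod_two, div_pow_mod_two, hki] at this
    cases htb : t.testBit i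
    · rw [htb] at this; simp [Nat.choose] at this
    · rfl
  · intro h i _
    rw [div_pow_mod_two, div_pow_mod_two]
    cases hkb : k.testBit i
    · cases t.testBit i <;> simp
    · rw [h i hkb]; simp

theorem stmt15 (t : ℕ) (ht : 0 < t) (hnp : ¬∃ q : ℕ, t = 2 ^ q) :
    ((Finset.range (t + 1)).filter fun k : ℕ =>
        Odd (Cz t (k : ℤ) - Cz t ((k : ℤ) - t))).card = 2 ^ dbin t - 1
      ∧ Odd (2 ^ dbin t - 1)
      ∧ 1 < 2 ^ dbin t - 1
      ∧ ¬∃ m : ℕ, 2 ^ dbin t - 1 = 2 ^ m := by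
  classical
  set T : Finset ℕ := t.bitIndices.toFinset with hT
  have hsumT : ∑ i ∈ T, 2 ^ i = t := Finset.twoPowSum_toFinset_bitIndices t
  have hcardT : T.card = dbin t := by
    rw [hT, List.card_toFinset, Nat.bitIndices_sorted.nodup.dedup, dbin_eq_length]
  -- the set of submasks
  set S : Finset ℕ := (Finset.range (t + 1)).filter
    (fun k => ∀ i, k.testBit i = true → t.testBit i = true) with hS
  have hSimage : S = T.powerset.image (fun s => ∑ i ∈ s, 2 ^ i) := by
    ext k
    simp only [hS, Finset.mem_filter, Finset.mem_range, Finset.mem_image,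
      Finset.mem_powerset]
    constructor
    · rintro ⟨-, hsub⟩
      refine ⟨k.bitIndices.toFinset, ?_, Finset.twoPowSum_toFinset_bitIndices k⟩
      intro i hi
      simp only [List.mem_toFinset] at hi ⊢
      exact List.mem_toFinset.mpr (mem_bitIndices_iff.mpr (hsub i (mem_bitIndices_iff.mp hi)))
    · rintro ⟨s, hsub, rfl⟩
      have hbi : (∑ i ∈ s, 2 ^ i).bitIndices.toFinset = s :=
        Finset.toFinset_bitIndices_twoPowSum s
      constructor
      · have : ∑ i ∈ s, 2 ^ i ≤ ∑ i ∈ T, 2 ^ i :=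
          Finset.sum_le_sum_of_subset hsub
        omega
      · intro i hi
        have : i ∈ s := by
          rw [← hbi]
          simp only [List.mem_toFinset]
          exact mem_bitIndices_iff.mpr hi
        exact mem_bitIndices_iff.mp (List.mem_toFinset.mp (hsub this))
  have hcardS : S.card = 2 ^ dbin t := by
    rw [hSimage, Finset.card_image_of_injective _ (Finset.geomSum_injective le_rfl),
      Finset.card_powerset, hcardT]
  -- the target filter equals S.erase t
  have hF : ((Finset.range (t + 1)).filter fun k : ℕ =>
      Odd (Cz t (k : ℤ) - Cz t ((k : ℤ) - t))) = S.erase t := by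
    ext k
    simp only [Finset.mem_filter, Finset.mem_range, Finset.mem_erase, hS]
    constructor
    · rintro ⟨hk, hodd⟩
      have hkt : k ≤ t := by omega
      rcases eq_or_lt_of_le hkt with heq | hlt
      · exfalso
        rw [heq] at hodd
        have h1 : Cz t (t : ℤ) = 1 := by
          simp [Cz, Nat.choose_self]
        have h2 : Cz t ((t : ℤ) - t) = 1 := by
          norm_num [Cz]
        rw [h1, h2] at hodd
        simp at hodd
      · have h1 : Cz t (k : ℤ) = (t.choose k : ℤ) := by
          simp [Cz, Int.ofNat_le.mpr hkt]
        have hneg : ¬(0 ≤ (k:ℤ) - t ∧ (k:ℤ) - t ≤ t) := by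
          rintro ⟨h, -⟩; omega
        have h2 : Cz t ((k : ℤ) - t) = 0 := by
          simp only [Cz]; rw [if_neg hneg]
        rw [h1, h2, sub_zero, Int.odd_coe_nat] at hodd
        exact ⟨by omega, hk, (odd_choose_iff hkt).mp hodd⟩
    · rintro ⟨hne, hk, hsub⟩
      have hkt : k ≤ t := by omega
      have hlt : k < t := lt_of_le_of_ne hkt hne
      have h1 : Cz t (k : ℤ) = (t.choose k : ℤ) := by
        simp [Cz, Int.ofNat_le.mpr hkt]
      have hneg : ¬(0 ≤ (k:ℤ) - t ∧ (k:ℤ) - t ≤ t) := by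
        rintro ⟨h, -⟩; omega
      have h2 : Cz t ((k : ℤ) - t) = 0 := by
        simp only [Cz]; rw [if_neg hneg]
      refine ⟨hk, ?_⟩
      rw [h1, h2, sub_zero, Int.odd_coe_nat]
      exact (odd_choose_iff hkt).mpr hsub
  have htS : t ∈ S := by
    simp [hS, Finset.mem_filter]
  have hd2 : 2 ≤ dbin t := by
    by_contra hd
    interval_cases hdb : dbin t
    · have : T = ∅ := Finset.card_eq_zero.mp (by omega)
      rw [this] at hsumT
      simp at hsumT
      omega
    · obtain ⟨a, haT⟩ := Finset.card_eq_one.mp (by omega : T.card = 1)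
      exact hnp ⟨a, by rw [← hsumT, haT]; simp⟩
  have hcard : ((Finset.range (t + 1)).filter fun k : ℕ =>
      Odd (Cz t (k : ℤ) - Cz t ((k : ℤ) - t))).card = 2 ^ dbin t - 1 := by
    rw [hF, Finset.card_erase_of_mem htS, hcardS]
  have hpow : 4 ≤ 2 ^ dbin t := by
    calc (4:ℕ) = 2 ^ 2 := rfl
    _ ≤ 2 ^ dbin t := Nat.pow_le_pow_right (by norm_num) hd2
  have hoddm : Odd (2 ^ dbin t - 1) := by
    have : Even (2 ^ dbin t) := by
      rw [Nat.even_pow]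
      exact ⟨even_two, by omega⟩
    exact Nat.Even.sub_odd (by omega) this odd_one
  refine ⟨hcard, hoddm, by omega, ?_⟩
  rintro ⟨m, hm⟩
  rcases Nat.eq_zero_or_pos m with rfl | hm0
  · simp at hm; omega
  · have : Even (2 ^ m) := by
      rw [Nat.even_pow]; exact ⟨even_two, by omega⟩
    rw [hm] at hoddm
    exact (Nat.not_odd_iff_even.mpr this) hoddm
end
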